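/- Let n ≥ 1. The number of stable n-sets of ZMod (2n+2), i.e. the number of vertices of the stable Kneser graph SG_{n,2}, is exactly (n+1)². -/
import Mathlib


/-!
Common definitions: stable n-sets in `ZMod (2*n+2)`, tight/loose sets, shifts,
outer neighbors, parity, the sets `P_i`, and adjacency in the stable Kneser
graph `SG_{n,2}` (two stable n-sets are adjacent iff they are disjoint).
-/

instance (n : ℕ) : NeZero (2 * n + 2) := ⟨by omega⟩

/-- A stable n-set: a finite subset of `ZMod (2n+2)` of cardinality `n`
containing no two (cyclically) consecutive elements. -/
def IsStable (n : ℕ) (α : Finset (ZMod (2 * n + 2))) : Prop :=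
  α.card = n ∧ ∀ i : ZMod (2 * n + 2), ¬(i ∈ α ∧ i + 1 ∈ α)

/-- A set is tight if it has the form `{i, i+2, i+4, …, i+2(n-1)}`. -/
def IsTight (n : ℕ) (α : Finset (ZMod (2 * n + 2))) : Prop :=
  ∃ i : ZMod (2 * n + 2), α = (Finset.range n).image (fun k : ℕ => i + 2 * (k : ZMod (2 * n + 2)))

/-- `α ⊕ j`, the shift of `α` by `j`. -/
def oplus (n : ℕ) (α : Finset (ZMod (2 * n + 2))) (j : ZMod (2 * n + 2)) :
    Finset (ZMod (2 * n + 2)) :=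
  α.image (fun a => a + j)

/-- `α ⊖ j`, the shift of `α` by `-j`. -/
def ominus (n : ℕ) (α : Finset (ZMod (2 * n + 2))) (j : ZMod (2 * n + 2)) :
    Finset (ZMod (2 * n + 2)) :=
  α.image (fun a => a - j)

/-- `β` is an outer neighbor of `α`: they are disjoint and
`β = ((α \ {a}) ⊕ 1) ∪ {a + 2}` for some `a ∈ α`. -/
def OuterNbr (n : ℕ) (α β : Finset (ZMod (2 * n + 2))) : Prop :=
  Disjoint α β ∧ ∃ a ∈ α, β = oplus n (α.erase a) 1 ∪ {a + 2}

/-- The parity of an element of `ZMod (2n+2)`: its image in `ZMod 2` under the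
natural ring homomorphism. -/
def parity (n : ℕ) (a : ZMod (2 * n + 2)) : ZMod 2 :=
  ZMod.castHom (show (2 : ℕ) ∣ 2 * n + 2 from ⟨n + 1, by ring⟩) (ZMod 2) a

/-- Adjacency in the stable Kneser graph `SG_{n,2}`: two distinct stable n-sets
are adjacent iff they are disjoint. -/
def SGAdj (n : ℕ) (α β : Finset (ZMod (2 * n + 2))) : Prop :=
  IsStable n α ∧ IsStable n β ∧ α ≠ β ∧ Disjoint α β

/-- `P_i`: stable n-sets with exactly `i` even elements and `n - i` odd elements. -/
def Pset (n i : ℕ) : Set (Finset (ZMod (2 * n + 2))) :=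
  {α | IsStable n α ∧ (α.filter fun a => parity n a = 0).card = i ∧
       (α.filter fun a => parity n a = 1).card = n - i}

/-- Max size of a set with no two consecutive integers in a window of 2n integers. -/
lemma bound_lemma : ∀ (n a : ℕ) (O : Finset ℕ),
    (∀ t ∈ O, a + 1 ≤ t ∧ t ≤ a + 2 * n) → (∀ t, ¬(t ∈ O ∧ t + 1 ∈ O)) → O.card ≤ n := by
  intro n
  induction n with
  | zero =>
    intro a O hb _
    have : O = ∅ := Finset.eq_empty_of_forall_notMem fun t ht => by
      have := hb t ht; omega
    simp [this]
  | succ n ih =>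
    intro a O hb hs
    set O' := (O.erase (a+1)).erase (a+2) with hO'
    have hb' : ∀ t ∈ O', (a+2) + 1 ≤ t ∧ t ≤ (a+2) + 2 * n := by
      intro t ht
      have h1 : t ≠ a + 2 := (Finset.mem_erase.mp ht).1
      have h2 : t ≠ a + 1 := (Finset.mem_erase.mp (Finset.mem_erase.mp ht).2).1
      have h3 : t ∈ O := Finset.mem_of_mem_erase (Finset.mem_of_mem_erase ht)
      have := hb t h3; omega
    have hs' : ∀ t, ¬(t ∈ O' ∧ t + 1 ∈ O') := by
      intro t ⟨h1, h2⟩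
      exact hs t ⟨Finset.mem_of_mem_erase (Finset.mem_of_mem_erase h1),
        Finset.mem_of_mem_erase (Finset.mem_of_mem_erase h2)⟩
    have hcard' : O'.card ≤ n := ih (a+2) O' hb' hs'
    by_cases h1 : a + 1 ∈ O
    · have h2 : a + 2 ∉ O := fun h2 => hs (a+1) ⟨h1, h2⟩
      have hsub : O ⊆ insert (a+1) O' := by
        intro t ht
        rcases eq_or_ne t (a+1) with rfl | hne
        · exact Finset.mem_insert_self _ _
        · refine Finset.mem_insert_of_mem ?_
          have : t ≠ a + 2 := by rintro rfl; exact h2 ht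
          exact Finset.mem_erase.mpr ⟨this, Finset.mem_erase.mpr ⟨hne, ht⟩⟩
      calc O.card ≤ (insert (a+1) O').card := Finset.card_le_card hsub
        _ ≤ O'.card + 1 := Finset.card_insert_le _ _
        _ ≤ n + 1 := by omega
    · have hsub : O ⊆ insert (a+2) O' := by
        intro t ht
        rcases eq_or_ne t (a+2) with rfl | hne
        · exact Finset.mem_insert_self _ _
        · refine Finset.mem_insert_of_mem ?_
          have : t ≠ a + 1 := by rintro rfl; exact h1 ht
          exact Finset.mem_erase.mpr ⟨hne, Finset.mem_erase.mpr ⟨this, ht⟩⟩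
      calc O.card ≤ (insert (a+2) O').card := Finset.card_le_card hsub
        _ ≤ O'.card + 1 := Finset.card_insert_le _ _
        _ ≤ n + 1 := by omega

/-- Structure of maximum-size non-consecutive sets in a window. -/
lemma key_lemma : ∀ (n a : ℕ) (O : Finset ℕ), O.card = n →
    (∀ t ∈ O, a + 1 ≤ t ∧ t ≤ a + 2 * n) → (∀ t, ¬(t ∈ O ∧ t + 1 ∈ O)) →
    ∃ s ≤ n, ∀ t, t ∈ O ↔
      ((t + a) % 2 = 1 ∧ a + 1 ≤ t ∧ t ≤ a + 2 * s) ∨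
      ((t + a) % 2 = 0 ∧ a + 2 * s + 2 ≤ t ∧ t ≤ a + 2 * n) := by
  intro n
  induction n with
  | zero =>
    intro a O hc hb hs
    refine ⟨0, le_refl _, fun t => ?_⟩
    rw [Finset.card_eq_zero] at hc
    simp [hc]; omega
  | succ n ih =>
    intro a O hc hb hs
    by_cases h1 : a + 1 ∈ O
    · -- erase a+1, shift a by 2
      set O' := O.erase (a+1) with hO'
      have hc' : O'.card = n := by rw [hO', Finset.card_erase_of_mem h1, hc]; omega
      have hmem' : ∀ t, t ∈ O' ↔ (t ∈ O ∧ t ≠ a + 1) := by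
        intro t; rw [hO', Finset.mem_erase]; tauto
      have hb' : ∀ t ∈ O', (a+2) + 1 ≤ t ∧ t ≤ (a+2) + 2 * n := by
        intro t ht
        have h2 := (hmem' t).mp ht
        have h3 := hb t h2.1
        have h4 : t ≠ a + 2 := by rintro rfl; exact hs (a+1) ⟨h1, h2.1⟩
        omega
      have hs' : ∀ t, ¬(t ∈ O' ∧ t + 1 ∈ O') := by
        intro t ⟨ha, hb⟩
        exact hs t ⟨((hmem' t).mp ha).1, ((hmem' (t+1)).mp hb).1⟩
      obtain ⟨s', hs'n, hchar⟩ := ih (a+2) O' hc' hb' hs'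
      refine ⟨s' + 1, by omega, fun t => ?_⟩
      have e1 : t ∈ O ↔ (t = a + 1 ∨ t ∈ O') := by
        rw [hmem' t]
        constructor
        · intro h; by_cases ht : t = a + 1 <;> tauto
        · rintro (rfl | h); exact h1; exact h.1
      rw [e1, hchar t]
      omega
    · by_cases h2 : a + 2 ∈ O
      · set O' := O.erase (a+2) with hO'
        have hc' : O'.card = n := by rw [hO', Finset.card_erase_of_mem h2, hc]; omega
        have hmem' : ∀ t, t ∈ O' ↔ (t ∈ O ∧ t ≠ a + 2) := by
          intro t; rw [hO', Finset.mem_erase]; tauto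
        have hb' : ∀ t ∈ O', (a+3) + 1 ≤ t ∧ t ≤ (a+3) + 2 * n := by
          intro t ht
          have h3 := (hmem' t).mp ht
          have h4 := hb t h3.1
          have h5 : t ≠ a + 1 := by rintro rfl; exact h1 h3.1
          have h6 : t ≠ a + 3 := by rintro rfl; exact hs (a+2) ⟨h2, h3.1⟩
          omega
        have hs' : ∀ t, ¬(t ∈ O' ∧ t + 1 ∈ O') := by
          intro t ⟨ha, hb⟩
          exact hs t ⟨((hmem' t).mp ha).1, ((hmem' (t+1)).mp hb).1⟩
        obtain ⟨s', hs'n, hchar⟩ := ih (a+3) O' hc' hb' hs'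
        -- s' must be n, else a+2n+3 ∈ O' contradicting the upper bound
        have hsn : s' = n := by
          by_contra hne
          have hmem : a + 2*n + 3 ∈ O' := by
            rw [hchar]; right; constructor
            · omega
            · omega
          have := hb _ ((hmem' _).mp hmem).1
          omega
        -- keep hsn
        refine ⟨0, by omega, fun t => ?_⟩
        have e1 : t ∈ O ↔ (t = a + 2 ∨ t ∈ O') := by
          rw [hmem' t]
          constructor
          · intro h; by_cases ht : t = a + 2 <;> tauto
          · rintro (rfl | h); exact h2; exact h.1
        have e2 : t ∈ O → t ≤ a + 2*n + 2 := fun h => (hb t h).2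
        rw [e1] at e2 ⊢
        rw [hchar t] at e2 ⊢
        omega
      · exfalso
        have : O.card ≤ n := by
          apply bound_lemma n (a+2) O
          · intro t ht
            have h3 := hb t ht
            have h5 : t ≠ a + 1 := by rintro rfl; exact h1 ht
            have h6 : t ≠ a + 2 := by rintro rfl; exact h2 ht
            omega
          · exact hs
        omega

def offs (s k : ℕ) : ℕ := 2 * k + if k < s then 1 else 2

def stdSet (n : ℕ) (p : ZMod (2 * n + 2)) (s : ℕ) : Finset (ZMod (2 * n + 2)) :=
  (Finset.range n).image fun k => p + ((offs s k : ℕ) : ZMod (2 * n + 2))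

lemma val_sub_eq (n : ℕ) (p x : ZMod (2 * n + 2)) : x = p + (((x - p).val : ℕ) : ZMod (2 * n + 2)) := by
  rw [ZMod.natCast_val, ZMod.cast_id]; ring

lemma sub_add_val (n : ℕ) (p : ZMod (2 * n + 2)) (o : ℕ) (ho : o < 2 * n + 2) :
    (p + (o : ZMod (2 * n + 2)) - p).val = o := by
  rw [add_sub_cancel_left, ZMod.val_natCast, Nat.mod_eq_of_lt ho]

lemma mem_stdSet_iff (n : ℕ) (p : ZMod (2 * n + 2)) (s : ℕ) (hs : s ≤ n) (x : ZMod (2 * n + 2)) :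
    x ∈ stdSet n p s ↔
      ((x - p).val % 2 = 1 ∧ 1 ≤ (x - p).val ∧ (x - p).val ≤ 2 * s) ∨
      ((x - p).val % 2 = 0 ∧ 2 * s + 2 ≤ (x - p).val ∧ (x - p).val ≤ 2 * n) := by
  constructor
  · intro hx
    obtain ⟨k, hk, rfl⟩ := Finset.mem_image.mp hx
    rw [Finset.mem_range] at hk
    have hlt : offs s k < 2 * n + 2 := by unfold offs; split <;> omega
    rw [sub_add_val n p _ hlt]
    unfold offs; split <;> [left; right] <;> omega
  · intro h
    set t := (x - p).val with ht
    have hxt : x = p + (t : ZMod (2 * n + 2)) := val_sub_eq n p x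
    rcases h with ⟨hpar, h1, h2⟩ | ⟨hpar, h1, h2⟩
    · refine Finset.mem_image.mpr ⟨t / 2, Finset.mem_range.mpr (by omega), ?_⟩
      have : offs s (t / 2) = t := by unfold offs; split <;> omega
      rw [this, ← hxt]
    · refine Finset.mem_image.mpr ⟨(t - 2) / 2, Finset.mem_range.mpr (by omega), ?_⟩
      have : offs s ((t - 2) / 2) = t := by unfold offs; split <;> omega
      rw [this, ← hxt]

lemma card_stdSet (n : ℕ) (p : ZMod (2 * n + 2)) (s : ℕ) : (stdSet n p s).card = n := by
  rw [stdSet, Finset.card_image_of_injOn, Finset.card_range]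
  intro j hj k hk he
  simp only [Finset.coe_range, Set.mem_Iio] at hj hk
  have hjlt : offs s j < 2 * n + 2 := by unfold offs; split <;> omega
  have hklt : offs s k < 2 * n + 2 := by unfold offs; split <;> omega
  have : offs s j = offs s k := by
    have h2 : (p + ((offs s j : ℕ) : ZMod (2*n+2)) - p).val
        = (p + ((offs s k : ℕ) : ZMod (2*n+2)) - p).val := by simp only [] at he; rw [he]
    rwa [sub_add_val n p _ hjlt, sub_add_val n p _ hklt] at h2
  unfold offs at this; revert this; split <;> split <;> omega

lemma stable_stdSet (n : ℕ) (p : ZMod (2 * n + 2)) (s : ℕ) (hs : s ≤ n) :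
    ∀ i : ZMod (2 * n + 2), ¬(i ∈ stdSet n p s ∧ i + 1 ∈ stdSet n p s) := by
  intro i ⟨h1, h2⟩
  rw [mem_stdSet_iff n p s hs] at h1 h2
  set t := (i - p).val with ht
  have htlt : t < 2 * n + 2 := ZMod.val_lt _
  have hit : i = p + (t : ZMod (2 * n + 2)) := val_sub_eq n p i
  have h1t : 1 ≤ t ∧ t ≤ 2 * n := by rcases h1 with ⟨_, a, b⟩ | ⟨_, a, b⟩ <;> omega
  have hsucc : (i + 1 - p).val = t + 1 := by
    have : i + 1 = p + ((t + 1 : ℕ) : ZMod (2 * n + 2)) := by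
      rw [hit]; push_cast; ring
    rw [this, sub_add_val n p _ (by omega)]
  rw [hsucc] at h2
  omega

lemma marker_stdSet (n : ℕ) (p : ZMod (2 * n + 2)) (s : ℕ) (hs : s ≤ n) (x : ZMod (2 * n + 2))
    (hx : x ∉ stdSet n p s) (hx1 : x - 1 ∉ stdSet n p s) :
    x = p ∨ x = p + ((2 * s + 1 : ℕ) : ZMod (2 * n + 2)) := by
  set t := (x - p).val with ht
  have htlt : t < 2 * n + 2 := ZMod.val_lt _
  have hxt : x = p + (t : ZMod (2 * n + 2)) := val_sub_eq n p x
  rcases Nat.eq_zero_or_pos t with h0 | h0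
  · left; rw [hxt, h0, Nat.cast_zero, add_zero]
  · have hprev : (x - 1 - p).val = t - 1 := by
      have e : x - 1 = p + ((t - 1 : ℕ) : ZMod (2 * n + 2)) := by
        have h2 : (t : ZMod (2 * n + 2)) = ((t - 1 : ℕ) : ZMod (2 * n + 2)) + 1 := by
          conv_lhs => rw [show t = (t - 1) + 1 from by omega]
          push_cast
          ring
        rw [hxt, h2]
        ring
      rw [e, sub_add_val n p _ (by omega)]
    rw [mem_stdSet_iff n p s hs] at hx hx1
    rw [hprev] at hx1
    have : t = 2 * s + 1 := by omega
    right; rw [hxt, this]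

lemma stdSet_self_cast (n : ℕ) : (((2 * n + 2 : ℕ)) : ZMod (2 * n + 2)) = 0 := ZMod.natCast_self _

lemma stdSet_shift (n : ℕ) (p : ZMod (2 * n + 2)) (s : ℕ) (hs : s ≤ n) :
    stdSet n p s = stdSet n (p + ((2 * s + 1 : ℕ) : ZMod (2 * n + 2))) (n - s) := by
  set q := p + ((2 * s + 1 : ℕ) : ZMod (2 * n + 2)) with hq
  ext x
  rw [mem_stdSet_iff n p s hs, mem_stdSet_iff n q (n - s) (by omega)]
  set t := (x - p).val with ht
  have htlt : t < 2 * n + 2 := ZMod.val_lt _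
  have hxt : x = p + (t : ZMod (2 * n + 2)) := val_sub_eq n p x
  have hu : (x - q).val = (if 2 * s + 1 ≤ t then t - (2 * s + 1) else t + (2 * n + 1) - 2 * s) := by
    split
    · next h =>
      have e : x = q + ((t - (2 * s + 1) : ℕ) : ZMod (2 * n + 2)) := by
        rw [hq, hxt]
        have h2 : (2 * s + 1) + (t - (2 * s + 1)) = t := by omega
        rw [add_assoc, ← Nat.cast_add, h2]
      rw [e, sub_add_val n q _ (by omega)]
    · next h =>
      have e : x = q + ((t + (2 * n + 1) - 2 * s : ℕ) : ZMod (2 * n + 2)) := by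
        rw [hq, hxt]
        have h2 : (2 * s + 1) + (t + (2 * n + 1) - 2 * s) = t + (2 * n + 2) := by omega
        rw [add_assoc, ← Nat.cast_add, h2, Nat.cast_add, stdSet_self_cast, add_zero]
      rw [e, sub_add_val n q _ (by omega)]
  split at hu <;> omega

lemma exists_marker (n : ℕ) (α : Finset (ZMod (2 * n + 2))) (hcard : α.card = n) :
    ∃ m, m ∉ α ∧ m - 1 ∉ α := by
  by_contra hcon
  push_neg at hcon
  have hsub : (Finset.univ \ α).image (fun a => a - 1) ⊆ α := by
    intro x hx
    obtain ⟨a, ha, rfl⟩ := Finset.mem_image.mp hx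
    exact hcon a (by simpa using (Finset.mem_sdiff.mp ha).2)
  have hinj : Function.Injective (fun a : ZMod (2 * n + 2) => a - 1) := by
    intro a b hab; simpa [sub_left_inj] using hab
  have h1 : ((Finset.univ \ α).image (fun a => a - 1)).card = 2 * n + 2 - n := by
    rw [Finset.card_image_of_injective _ hinj, Finset.card_sdiff_of_subset (Finset.subset_univ _),
      Finset.card_univ, ZMod.card, hcard]
  have h2 := Finset.card_le_card hsub
  rw [h1, hcard] at h2
  omega

lemma structure_lemma (n : ℕ) (α : Finset (ZMod (2 * n + 2))) (hcard : α.card = n)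
    (hstab : ∀ i : ZMod (2 * n + 2), ¬(i ∈ α ∧ i + 1 ∈ α)) :
    ∃ p s, s ≤ n ∧ α = stdSet n p s := by
  obtain ⟨m, hm, hm1⟩ := exists_marker n α hcard
  set O : Finset ℕ := α.image (fun a => (a - m).val) with hO
  have hval_inj : ∀ a ∈ α, ∀ b ∈ α, (a - m).val = (b - m).val → a = b := by
    intro a _ b _ hab
    have : a - m = b - m := ZMod.val_injective _ hab
    simpa [sub_left_inj] using this
  have hOcard : O.card = n := by
    rw [hO, Finset.card_image_of_injOn (fun a ha b hb => hval_inj a ha b hb), hcard]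
  have hmemO : ∀ t, t ∈ O ↔ ∃ a ∈ α, (a - m).val = t := by
    intro t; simp [hO]
  have hbound : ∀ t ∈ O, 0 + 1 ≤ t ∧ t ≤ 0 + 2 * n := by
    intro t htO
    obtain ⟨a, ha, rfl⟩ := (hmemO t).mp htO
    have h1 : (a - m).val < 2 * n + 2 := ZMod.val_lt _
    have h2 : (a - m).val ≠ 0 := by
      intro h
      have : a - m = 0 := by rwa [ZMod.val_eq_zero] at h
      have : a = m := by rwa [sub_eq_zero] at this
      exact hm (this ▸ ha)
    have h3 : (a - m).val ≠ 2 * n + 1 := by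
      intro h
      have e : a = m + (((2 * n + 1 : ℕ)) : ZMod (2 * n + 2)) := by
        have := val_sub_eq n m a; rwa [h] at this
      have e2 : a = m - 1 := by
        rw [e]
        have : (((2 * n + 1 : ℕ)) : ZMod (2 * n + 2)) = -1 := by
          have h3 : ((2 * n + 1 : ℕ) : ZMod (2 * n + 2)) + 1 = ((2 * n + 2 : ℕ) : ZMod (2 * n + 2)) := by
            push_cast; ring
          rw [stdSet_self_cast] at h3
          linear_combination h3
        rw [this]; ring
      exact hm1 (e2 ▸ ha)
    omega
  have hnc : ∀ t, ¬(t ∈ O ∧ t + 1 ∈ O) := by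
    intro t ⟨h1, h2⟩
    obtain ⟨a, ha, hat⟩ := (hmemO t).mp h1
    obtain ⟨b, hb, hbt⟩ := (hmemO (t + 1)).mp h2
    have htlt : t + 1 < 2 * n + 2 := by
      have := hbound (t + 1) h2; omega
    have ea : a = m + (t : ZMod (2 * n + 2)) := by
      have := val_sub_eq n m a; rwa [hat] at this
    have eb : b = m + ((t + 1 : ℕ) : ZMod (2 * n + 2)) := by
      have := val_sub_eq n m b; rwa [hbt] at this
    have : b = a + 1 := by rw [ea, eb]; push_cast; ring
    exact hstab a ⟨ha, this ▸ hb⟩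
  obtain ⟨s, hsn, hchar⟩ := key_lemma n 0 O hOcard hbound hnc
  refine ⟨m, s, hsn, ?_⟩
  ext x
  have hx_iff : x ∈ α ↔ (x - m).val ∈ O := by
    constructor
    · intro h; exact (hmemO _).mpr ⟨x, h, rfl⟩
    · intro h
      obtain ⟨a, ha, hav⟩ := (hmemO _).mp h
      have := hval_inj a ha a ha rfl
      have : a = x := by
        have : a - m = x - m := ZMod.val_injective _ hav
        simpa [sub_left_inj] using this
      exact this ▸ ha
  rw [hx_iff, hchar, mem_stdSet_iff n m s hsn]
  omega

lemma cast_small_inj (n a b : ℕ) (ha : a < 2 * n + 2) (hb : b < 2 * n + 2)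
    (h : ((a : ℕ) : ZMod (2 * n + 2)) = ((b : ℕ) : ZMod (2 * n + 2))) : a = b := by
  have := congrArg ZMod.val h
  rwa [ZMod.val_natCast, ZMod.val_natCast, Nat.mod_eq_of_lt ha, Nat.mod_eq_of_lt hb] at this

lemma parity_add (n : ℕ) (a b : ZMod (2 * n + 2)) :
    parity n (a + b) = parity n a + parity n b := by
  unfold parity; exact map_add _ a b

lemma parity_natCast (n k : ℕ) : parity n ((k : ℕ) : ZMod (2 * n + 2)) = (k : ZMod 2) := by
  unfold parity; exact map_natCast _ k

lemma parity_eq_val (n : ℕ) (p : ZMod (2 * n + 2)) : parity n p = ((p.val : ℕ) : ZMod 2) := by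
  have h : ((p.val : ℕ) : ZMod (2 * n + 2)) = p := by rw [ZMod.natCast_val, ZMod.cast_id]
  conv_lhs => rw [← h]
  exact parity_natCast n p.val

lemma parity_zero_iff (n : ℕ) (p : ZMod (2 * n + 2)) : parity n p = 0 ↔ p.val % 2 = 0 := by
  rw [parity_eq_val]
  constructor
  · intro h
    have := (ZMod.natCast_eq_zero_iff p.val 2).mp h
    omega
  · intro h
    exact (ZMod.natCast_eq_zero_iff p.val 2).mpr (by omega)

lemma parity_odd_natCast (s : ℕ) : ((2 * s + 1 : ℕ) : ZMod 2) = 1 := by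
  push_cast
  rw [show ((2 : ZMod 2)) = 0 from rfl]
  ring

lemma card_evens (n : ℕ) :
    (Finset.univ.filter fun p : ZMod (2 * n + 2) => parity n p = 0).card = n + 1 := by
  have himg : (Finset.univ.filter fun p : ZMod (2 * n + 2) => parity n p = 0)
      = (Finset.range (n + 1)).image (fun k => ((2 * k : ℕ) : ZMod (2 * n + 2))) := by
    ext p
    simp only [Finset.mem_filter, Finset.mem_univ, true_and, Finset.mem_image, Finset.mem_range]
    rw [parity_zero_iff]
    constructor
    · intro h
      refine ⟨p.val / 2, by have := ZMod.val_lt p; omega, ?_⟩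
      have h2 : 2 * (p.val / 2) = p.val := by omega
      rw [h2, ZMod.natCast_val, ZMod.cast_id]
    · rintro ⟨k, hk, rfl⟩
      have hv : ((2 * k : ℕ) : ZMod (2 * n + 2)).val = 2 * k := by
        rw [ZMod.val_natCast]
        exact Nat.mod_eq_of_lt (by omega)
      rw [hv]
      omega
  rw [himg, Finset.card_image_of_injOn, Finset.card_range]
  intro j hj k hk he
  simp only [Finset.coe_range, Set.mem_Iio] at hj hk
  simp only [] at he
  have h := cast_small_inj n (2 * j) (2 * k) (by omega) (by omega) he
  omega

lemma base_notMem (n : ℕ) (p : ZMod (2 * n + 2)) (s : ℕ) (hs : s ≤ n) :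
    p ∉ stdSet n p s ∧ p - 1 ∉ stdSet n p s := by
  constructor
  · rw [mem_stdSet_iff n p s hs, sub_self, ZMod.val_zero]
    omega
  · rw [mem_stdSet_iff n p s hs]
    have h1 : p - 1 - p = ((2 * n + 1 : ℕ) : ZMod (2 * n + 2)) := by
      have h3 : ((2 * n + 1 : ℕ) : ZMod (2 * n + 2)) + 1
          = ((2 * n + 2 : ℕ) : ZMod (2 * n + 2)) := by push_cast; ring
      rw [stdSet_self_cast] at h3
      linear_combination -h3
    have hv : ((2 * n + 1 : ℕ) : ZMod (2 * n + 2)).val = 2 * n + 1 := by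
      rw [ZMod.val_natCast]
      exact Nat.mod_eq_of_lt (by omega)
    rw [h1, hv]
    omega

lemma skip_notMem (n : ℕ) (p : ZMod (2 * n + 2)) (s : ℕ) (hs : s ≤ n) :
    p + ((2 * s + 1 : ℕ) : ZMod (2 * n + 2)) ∉ stdSet n p s ∧
    p + ((2 * s + 1 : ℕ) : ZMod (2 * n + 2)) - 1 ∉ stdSet n p s := by
  constructor
  · rw [mem_stdSet_iff n p s hs, sub_add_val n p _ (by omega)]
    omega
  · rw [mem_stdSet_iff n p s hs]
    have h1 : p + ((2 * s + 1 : ℕ) : ZMod (2 * n + 2)) - 1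
        = p + ((2 * s : ℕ) : ZMod (2 * n + 2)) := by push_cast; ring
    rw [h1, sub_add_val n p _ (by omega)]
    omega


/-- The stable Kneser graph `SG_{n,2}` has exactly `(n+1)²` vertices. -/
theorem card_stable_sets (n : ℕ) (hn : 1 ≤ n) :
    {α : Finset (ZMod (2 * n + 2)) | IsStable n α}.ncard = (n + 1) ^ 2 := by
  classical
  have main : {α : Finset (ZMod (2 * n + 2)) | IsStable n α}
      = ↑((((Finset.univ.filter fun p : ZMod (2 * n + 2) => parity n p = 0)
          ×ˢ Finset.range (n + 1)).image (fun z => stdSet n z.1 z.2))) := by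
    ext α
    simp only [Set.mem_setOf_eq, Finset.coe_image, Set.mem_image, Finset.mem_coe,
      Finset.mem_product, Finset.mem_filter, Finset.mem_univ, true_and, Finset.mem_range]
    constructor
    · rintro ⟨hcard, hstab⟩
      obtain ⟨p, s, hsn, rfl⟩ := structure_lemma n α hcard hstab
      by_cases hp : parity n p = 0
      · exact ⟨(p, s), ⟨hp, by omega⟩, rfl⟩
      · refine ⟨(p + ((2 * s + 1 : ℕ) : ZMod (2 * n + 2)), n - s), ⟨?_, by omega⟩,
          (stdSet_shift n p s hsn).symm⟩
        have hp1 : parity n p = 1 := by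
          have h2 : ∀ z : ZMod 2, z ≠ 0 → z = 1 := by decide
          exact h2 _ hp
        rw [parity_add, hp1, parity_natCast, parity_odd_natCast]
        decide
    · rintro ⟨⟨p, s⟩, ⟨hp, hs⟩, rfl⟩
      exact ⟨card_stdSet n p s, stable_stdSet n p s (by omega)⟩
  rw [main, Set.ncard_coe_finset, Finset.card_image_of_injOn, Finset.card_product,
    card_evens, Finset.card_range]
  · ring
  · rintro ⟨p1, s1⟩ h1 ⟨p2, s2⟩ h2 he
    simp only [Finset.coe_product, Set.mem_prod, Finset.mem_coe, Finset.mem_filter,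
      Finset.mem_univ, true_and, Finset.mem_range] at h1 h2
    obtain ⟨hp1, hs1⟩ := h1
    obtain ⟨hp2, hs2⟩ := h2
    have hs1' : s1 ≤ n := by omega
    have hs2' : s2 ≤ n := by omega
    simp only [] at he
    -- step 1 : p1 = p2
    have hb := base_notMem n p1 s1 hs1'
    have hmk := marker_stdSet n p2 s2 hs2' p1 (he ▸ hb.1) (he ▸ hb.2)
    have hpp : p1 = p2 := by
      rcases hmk with h | h
      · exact h
      · exfalso
        have : parity n p1 = 1 := by
          rw [h, parity_add, hp2, parity_natCast, parity_odd_natCast]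
          decide
        rw [hp1] at this
        exact absurd this (by decide)
    subst hpp
    -- step 2 : s1 = s2
    have hq := skip_notMem n p1 s1 hs1'
    have hmk2 := marker_stdSet n p1 s2 hs2' (p1 + ((2 * s1 + 1 : ℕ) : ZMod (2 * n + 2)))
      (he ▸ hq.1) (he ▸ hq.2)
    have hss : s1 = s2 := by
      rcases hmk2 with h | h
      · exfalso
        have h2 : ((2 * s1 + 1 : ℕ) : ZMod (2 * n + 2)) = ((0 : ℕ) : ZMod (2 * n + 2)) := by
          rw [Nat.cast_zero]
          linear_combination h
        have := cast_small_inj n (2 * s1 + 1) 0 (by omega) (by omega) h2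
        omega
      · have h2 : ((2 * s1 + 1 : ℕ) : ZMod (2 * n + 2)) = ((2 * s2 + 1 : ℕ) : ZMod (2 * n + 2)) := by
          exact add_left_cancel h
        have := cast_small_inj n (2 * s1 + 1) (2 * s2 + 1) (by omega) (by omega) h2
        omega
    rw [hss]
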